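/- arXiv:1906.06727 — 2 statements merged into one kernel-verified Lean document; each statement's English description precedes it below -/
import Mathlib

section
/- Let $M_x, K_x$ be $n \times n$ real matrices and $M_y, K_y$ be $m \times m$ real matrices with $M_x, M_y$ invertible, and suppose $K_x = M_x P_x D_x P_x^{-1}$ and $K_y = M_y P_y D_y P_y^{-1}$ where $P_x, P_y$ are invertible and $D_x, D_y$ are diagonal. Let $\eta$ be a real number such that $I + \eta D_x$ and $I + \eta D_y$ are invertible. Set $\tilde{G} = (M_x + \eta K_x) \otimes (M_y + \eta K_y)$ and $\tilde{K} = \eta^2 K_x \otimes K_y$. Then $\tilde{G}$ is invertible and $\tilde{G}^{-1} \tilde{K} = (P_x \otimes P_y) \cdot \big( \eta (I + \eta D_x)^{-1} D_x \otimes \eta (I + \eta D_y)^{-1} D_y \big) \cdot (P_x^{-1} \otimes P_y^{-1})$; in particular $\tilde{G}^{-1}\tilde{K}$ is similar to a diagonal matrix whose diagonal entries are $\frac{\eta^2 \lambda_{x,i}\lambda_{y,j}}{(1+\eta\lambda_{x,i})(1+\eta\lambda_{y,j})}$, where $\lambda_{x,i}$ and $\lambda_{y,j}$ run over the diagonal entries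 of $D_x$ and $D_y$. -/
open Matrix Kronecker

private lemma isUnit_kron {n m : ℕ} {A : Matrix (Fin n) (Fin n) ℝ}
    {B : Matrix (Fin m) (Fin m) ℝ} (hA : IsUnit A) (hB : IsUnit B) :
    IsUnit (A ⊗ₖ B) := by
  have h : (A ⊗ₖ B) * (A⁻¹ ⊗ₖ B⁻¹) = 1 := by
    rw [← Matrix.mul_kronecker_mul,
      Matrix.mul_nonsing_inv _ ((Matrix.isUnit_iff_isUnit_det _).mp hA),
      Matrix.mul_nonsing_inv _ ((Matrix.isUnit_iff_isUnit_det _).mp hB),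
      Matrix.one_kronecker_one]
  have h' : (A⁻¹ ⊗ₖ B⁻¹) * (A ⊗ₖ B) = 1 := by
    rw [← Matrix.mul_kronecker_mul,
      Matrix.nonsing_inv_mul _ ((Matrix.isUnit_iff_isUnit_det _).mp hA),
      Matrix.nonsing_inv_mul _ ((Matrix.isUnit_iff_isUnit_det _).mp hB),
      Matrix.one_kronecker_one]
  exact ⟨⟨A ⊗ₖ B, A⁻¹ ⊗ₖ B⁻¹, h, h'⟩, rfl⟩

theorem stmt_2 {n m : ℕ} (Mx Kx Px : Matrix (Fin n) (Fin n) ℝ)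
    (My Ky Py : Matrix (Fin m) (Fin m) ℝ)
    (dx : Fin n → ℝ) (dy : Fin m → ℝ)
    (hMx : IsUnit Mx) (hMy : IsUnit My) (hPx : IsUnit Px) (hPy : IsUnit Py)
    (hKx : Kx = Mx * Px * diagonal dx * Px⁻¹)
    (hKy : Ky = My * Py * diagonal dy * Py⁻¹)
    (η : ℝ)
    (hηx : IsUnit (1 + η • diagonal dx)) (hηy : IsUnit (1 + η • diagonal dy))
    (Gtilde : Matrix (Fin n × Fin m) (Fin n × Fin m) ℝ)
    (Ktilde : Matrix (Fin n × Fin m) (Fin n × Fin m) ℝ)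
    (hG : Gtilde = (Mx + η • Kx) ⊗ₖ (My + η • Ky))
    (hKt : Ktilde = η ^ 2 • (Kx ⊗ₖ Ky)) :
    IsUnit Gtilde ∧
      Gtilde⁻¹ * Ktilde =
        (Px ⊗ₖ Py) *
          ((η • ((1 + η • diagonal dx)⁻¹ * diagonal dx)) ⊗ₖ
            (η • ((1 + η • diagonal dy)⁻¹ * diagonal dy))) *
          (Px⁻¹ ⊗ₖ Py⁻¹) ∧
      (η • ((1 + η • diagonal dx)⁻¹ * diagonal dx)) ⊗ₖ
          (η • ((1 + η • diagonal dy)⁻¹ * diagonal dy)) =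
        diagonal (fun p : Fin n × Fin m =>
          η ^ 2 * dx p.1 * dy p.2 / ((1 + η * dx p.1) * (1 + η * dy p.2))) := by
  have hPx' := (Matrix.isUnit_iff_isUnit_det _).mp hPx
  have hPy' := (Matrix.isUnit_iff_isUnit_det _).mp hPy
  have hηx' := (Matrix.isUnit_iff_isUnit_det _).mp hηx
  have hηy' := (Matrix.isUnit_iff_isUnit_det _).mp hηy
  haveI : Invertible Px := Px.invertibleOfIsUnitDet hPx'
  haveI : Invertible Py := Py.invertibleOfIsUnitDet hPy'
  haveI : Invertible (1 + η • diagonal dx) := Matrix.invertibleOfIsUnitDet _ hηx'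
  haveI : Invertible (1 + η • diagonal dy) := Matrix.invertibleOfIsUnitDet _ hηy'
  -- decompositions
  have hAx : Mx + η • Kx = Mx * Px * (1 + η • diagonal dx) * Px⁻¹ := by
    rw [hKx, mul_add, mul_one, add_mul, Matrix.mul_inv_cancel_right_of_invertible,
      Matrix.mul_smul, Matrix.smul_mul]
  have hAy : My + η • Ky = My * Py * (1 + η • diagonal dy) * Py⁻¹ := by
    rw [hKy, mul_add, mul_one, add_mul, Matrix.mul_inv_cancel_right_of_invertible,
      Matrix.mul_smul, Matrix.smul_mul]
  have hGu : IsUnit Gtilde := by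
    rw [hG, hAx, hAy]
    exact isUnit_kron (((hMx.mul hPx).mul hηx).mul (Matrix.isUnit_nonsing_inv_iff.mpr hPx))
      (((hMy.mul hPy).mul hηy).mul (Matrix.isUnit_nonsing_inv_iff.mpr hPy))
  refine ⟨hGu, ?_, ?_⟩
  · have key : Gtilde *
        ((Px ⊗ₖ Py) *
          ((η • ((1 + η • diagonal dx)⁻¹ * diagonal dx)) ⊗ₖ
            (η • ((1 + η • diagonal dy)⁻¹ * diagonal dy))) *
          (Px⁻¹ ⊗ₖ Py⁻¹)) = Ktilde := by
      rw [hG, hAx, hAy, hKt, ← Matrix.mul_kronecker_mul, ← Matrix.mul_kronecker_mul,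
        ← Matrix.mul_kronecker_mul]
      have ex : Mx * Px * (1 + η • diagonal dx) * Px⁻¹ *
          (Px * (η • ((1 + η • diagonal dx)⁻¹ * diagonal dx)) * Px⁻¹) = η • Kx := by
        simp only [Matrix.mul_smul, Matrix.smul_mul, hKx, mul_assoc,
          Matrix.inv_mul_cancel_left_of_invertible, Matrix.mul_inv_cancel_left_of_invertible]
      have ey : My * Py * (1 + η • diagonal dy) * Py⁻¹ *
          (Py * (η • ((1 + η • diagonal dy)⁻¹ * diagonal dy)) * Py⁻¹) = η • Ky := by
        simp only [Matrix.mul_smul, Matrix.smul_mul, hKy, mul_assoc,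
          Matrix.inv_mul_cancel_left_of_invertible, Matrix.mul_inv_cancel_left_of_invertible]
      rw [ex, ey, Matrix.smul_kronecker, Matrix.kronecker_smul, smul_smul, sq]
    calc Gtilde⁻¹ * Ktilde = Gtilde⁻¹ * (Gtilde * _) := by rw [key]
      _ = _ := by
          rw [← mul_assoc, Matrix.nonsing_inv_mul _ ((Matrix.isUnit_iff_isUnit_det _).mp hGu),
            one_mul]
  · have hdx : (1 : Matrix (Fin n) (Fin n) ℝ) + η • diagonal dx
        = diagonal (fun i => 1 + η * dx i) := by
      rw [← Matrix.diagonal_one, ← Matrix.diagonal_smul, ← Matrix.diagonal_add]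
      rfl
    have hdy : (1 : Matrix (Fin m) (Fin m) ℝ) + η • diagonal dy
        = diagonal (fun j => 1 + η * dy j) := by
      rw [← Matrix.diagonal_one, ← Matrix.diagonal_smul, ← Matrix.diagonal_add]
      rfl
    have hnx : ∀ i, 1 + η * dx i ≠ 0 := fun i =>
      isUnit_iff_ne_zero.mp
        ((Matrix.isUnit_diagonal.mp (hdx ▸ hηx)).map (Pi.evalMonoidHom (fun _ => ℝ) i))
    have hny : ∀ j, 1 + η * dy j ≠ 0 := fun j =>
      isUnit_iff_ne_zero.mp
        ((Matrix.isUnit_diagonal.mp (hdy ▸ hηy)).map (Pi.evalMonoidHom (fun _ => ℝ) j))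
    have hinvx : (diagonal fun i => 1 + η * dx i)⁻¹
        = diagonal (fun i => (1 + η * dx i)⁻¹) :=
      Matrix.inv_eq_right_inv (by
        rw [Matrix.diagonal_mul_diagonal,
          show (fun i => (1 + η * dx i) * (1 + η * dx i)⁻¹) = fun _ => (1:ℝ) from
            funext fun i => mul_inv_cancel₀ (hnx i), Matrix.diagonal_one])
    have hinvy : (diagonal fun j => 1 + η * dy j)⁻¹
        = diagonal (fun j => (1 + η * dy j)⁻¹) :=
      Matrix.inv_eq_right_inv (by
        rw [Matrix.diagonal_mul_diagonal,
          show (fun j => (1 + η * dy j) * (1 + η * dy j)⁻¹) = fun _ => (1:ℝ) from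
            funext fun j => mul_inv_cancel₀ (hny j), Matrix.diagonal_one])
    rw [hdx, hdy, hinvx, hinvy,
      Matrix.diagonal_mul_diagonal, Matrix.diagonal_mul_diagonal,
      ← Matrix.diagonal_smul, ← Matrix.diagonal_smul, Matrix.diagonal_kronecker_diagonal]
    refine congrArg diagonal (funext fun p => ?_)
    simp only [Pi.smul_apply, Pi.mul_apply, smul_eq_mul]
    have h1 := hnx p.1
    have h2 := hny p.2
    set a := 1 + η * dx p.1 with ha
    set b := 1 + η * dy p.2 with hb
    field_simp
end

section
/- Let $M_x, K_x, M_y, K_y, P_x, P_y, D_x, D_y, \eta, \tilde{G}, \tilde{K}$ be as follows: $M_x, M_y$ invertible real matrices, $K_x = M_x P_x D_x P_x^{-1}$, $K_y = M_y P_y D_y P_y^{-1}$ with $P_x, P_y$ invertible and $D_x, D_y$ diagonal, $\eta$ real with $I + \eta D_x$ and $I + \eta D_y$ invertible, $\tilde{G} = (M_x + \eta K_x) \otimes (M_y + \eta K_y)$ and $\tilde{K} = \eta^2 K_x \otimes K_y$. Then every eigenvalue $\lambda$ of the matrix $\tilde{G}^{-1}\tilde{K}$ (over $\mathbb{R}$)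 is of the form $\lambda = \frac{\eta^2 \lambda_{x,i} \lambda_{y,j}}{(1 + \eta \lambda_{x,i})(1 + \eta \lambda_{y,j})}$ for some diagonal entries $\lambda_{x,i}$ of $D_x$ and $\lambda_{y,j}$ of $D_y$. -/
open Matrix Kronecker

theorem stmt_3 {n m : ℕ} (Mx Kx Px : Matrix (Fin n) (Fin n) ℝ)
    (My Ky Py : Matrix (Fin m) (Fin m) ℝ)
    (dx : Fin n → ℝ) (dy : Fin m → ℝ)
    (hMx : IsUnit Mx) (hMy : IsUnit My) (hPx : IsUnit Px) (hPy : IsUnit Py)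
    (hKx : Kx = Mx * Px * diagonal dx * Px⁻¹)
    (hKy : Ky = My * Py * diagonal dy * Py⁻¹)
    (η : ℝ)
    (hηx : IsUnit (1 + η • diagonal dx)) (hηy : IsUnit (1 + η • diagonal dy))
    (Gtilde : Matrix (Fin n × Fin m) (Fin n × Fin m) ℝ)
    (Ktilde : Matrix (Fin n × Fin m) (Fin n × Fin m) ℝ)
    (hG : Gtilde = (Mx + η • Kx) ⊗ₖ (My + η • Ky))
    (hKt : Ktilde = η ^ 2 • (Kx ⊗ₖ Ky))
    (lam : ℝ) (v : Fin n × Fin m → ℝ) (hv : v ≠ 0)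
    (heig : (Gtilde⁻¹ * Ktilde).mulVec v = lam • v) :
    ∃ (i : Fin n) (j : Fin m),
      lam = η ^ 2 * dx i * dy j / ((1 + η * dx i) * (1 + η * dy j)) := by
  -- notation
  set ex : Fin n → ℝ := fun i => 1 + η * dx i with hex
  set ey : Fin m → ℝ := fun j => 1 + η * dy j with hey
  have hEx : (1 : Matrix (Fin n) (Fin n) ℝ) + η • diagonal dx = diagonal ex := by
    ext i j
    by_cases h : i = j <;> simp [diagonal_apply, one_apply, h, hex]
  have hEy : (1 : Matrix (Fin m) (Fin m) ℝ) + η • diagonal dy = diagonal ey := by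
    ext i j
    by_cases h : i = j <;> simp [diagonal_apply, one_apply, h, hey]
  rw [hEx] at hηx
  rw [hEy] at hηy
  -- entries of ex, ey are nonzero
  have hexne : ∀ i, ex i ≠ 0 := by
    intro i
    have h := (Matrix.isUnit_iff_isUnit_det _).mp hηx
    rw [det_diagonal, isUnit_iff_ne_zero] at h
    exact Finset.prod_ne_zero_iff.mp h i (Finset.mem_univ i)
  have heyne : ∀ j, ey j ≠ 0 := by
    intro j
    have h := (Matrix.isUnit_iff_isUnit_det _).mp hηy
    rw [det_diagonal, isUnit_iff_ne_zero] at h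
    exact Finset.prod_ne_zero_iff.mp h j (Finset.mem_univ j)
  -- inverse facts
  have hMxd := (Matrix.isUnit_iff_isUnit_det _).mp hMx
  have hMyd := (Matrix.isUnit_iff_isUnit_det _).mp hMy
  have hPxd := (Matrix.isUnit_iff_isUnit_det _).mp hPx
  have hPyd := (Matrix.isUnit_iff_isUnit_det _).mp hPy
  -- factorizations
  have hfx : Mx + η • Kx = Mx * Px * diagonal ex * Px⁻¹ := by
    rw [hKx, ← hEx, mul_add, add_mul, mul_one, Matrix.mul_assoc Mx Px Px⁻¹,
      Matrix.mul_nonsing_inv _ hPxd, mul_one, Matrix.mul_smul, Matrix.smul_mul]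
  have hfy : My + η • Ky = My * Py * diagonal ey * Py⁻¹ := by
    rw [hKy, ← hEy, mul_add, add_mul, mul_one, Matrix.mul_assoc My Py Py⁻¹,
      Matrix.mul_nonsing_inv _ hPyd, mul_one, Matrix.mul_smul, Matrix.smul_mul]
  -- Gtilde is invertible
  have hXunit : IsUnit (Mx + η • Kx) := by
    rw [hfx]
    exact ((hMx.mul hPx).mul hηx).mul (Matrix.isUnit_nonsing_inv_iff.mpr hPx)
  have hYunit : IsUnit (My + η • Ky) := by
    rw [hfy]
    exact ((hMy.mul hPy).mul hηy).mul (Matrix.isUnit_nonsing_inv_iff.mpr hPy)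
  have hGdet : IsUnit Gtilde.det := by
    rw [hG, det_kronecker]
    exact (((Matrix.isUnit_iff_isUnit_det _).mp hXunit).pow _).mul
      (((Matrix.isUnit_iff_isUnit_det _).mp hYunit).pow _)
  -- From the eigen equation: Ktilde v = lam • Gtilde v
  have key : Ktilde.mulVec v = lam • Gtilde.mulVec v := by
    have := congrArg (fun w => Gtilde.mulVec w) heig
    simp only [Matrix.mulVec_mulVec, Matrix.mulVec_smul] at this
    rwa [← Matrix.mul_assoc, Matrix.mul_nonsing_inv _ hGdet, Matrix.one_mul] at this
  -- rewrite Gtilde and Ktilde as products with Q' = Px⁻¹ ⊗ₖ Py⁻¹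
  have hGfact : Gtilde = ((Mx * Px * diagonal ex) ⊗ₖ (My * Py * diagonal ey)) *
      (Px⁻¹ ⊗ₖ Py⁻¹) := by
    rw [hG, hfx, hfy, ← mul_kronecker_mul]
  have hKfact : Ktilde = η ^ 2 • (((Mx * Px * diagonal dx) ⊗ₖ (My * Py * diagonal dy)) *
      (Px⁻¹ ⊗ₖ Py⁻¹)) := by
    rw [hKt, hKx, hKy, ← mul_kronecker_mul]
  set u : Fin n × Fin m → ℝ := (Px⁻¹ ⊗ₖ Py⁻¹).mulVec v with hu
  have hQQ : (Px ⊗ₖ Py) * (Px⁻¹ ⊗ₖ Py⁻¹) = 1 := by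
    rw [← mul_kronecker_mul, Matrix.mul_nonsing_inv _ hPxd, Matrix.mul_nonsing_inv _ hPyd,
      one_kronecker_one]
  have hune : u ≠ 0 := by
    intro h0
    apply hv
    have : (Px ⊗ₖ Py).mulVec u = v := by
      rw [hu, Matrix.mulVec_mulVec, hQQ, Matrix.one_mulVec]
    rw [h0, Matrix.mulVec_zero] at this
    exact this.symm
  -- cancel the invertible left factors
  have cancel : ∀ {k : ℕ} (M P D : Matrix (Fin k) (Fin k) ℝ),
      IsUnit M.det → IsUnit P.det → (P⁻¹ * M⁻¹) * (M * P * D) = D := by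
    intro k M P D hM hP
    have h1 : (P⁻¹ * M⁻¹) * (M * P) = 1 := by
      rw [Matrix.mul_assoc, ← Matrix.mul_assoc M⁻¹, Matrix.nonsing_inv_mul _ hM,
        Matrix.one_mul, Matrix.nonsing_inv_mul _ hP]
    rw [← Matrix.mul_assoc, h1, Matrix.one_mul]
  have hCK : ((Px⁻¹ * Mx⁻¹) ⊗ₖ (Py⁻¹ * My⁻¹)) * Ktilde =
      η ^ 2 • ((diagonal dx ⊗ₖ diagonal dy) * (Px⁻¹ ⊗ₖ Py⁻¹)) := by
    rw [hKfact, Matrix.mul_smul, ← Matrix.mul_assoc, ← mul_kronecker_mul,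
      cancel _ _ _ hMxd hPxd, cancel _ _ _ hMyd hPyd]
  have hCG : ((Px⁻¹ * Mx⁻¹) ⊗ₖ (Py⁻¹ * My⁻¹)) * Gtilde =
      (diagonal ex ⊗ₖ diagonal ey) * (Px⁻¹ ⊗ₖ Py⁻¹) := by
    rw [hGfact, ← Matrix.mul_assoc, ← mul_kronecker_mul,
      cancel _ _ _ hMxd hPxd, cancel _ _ _ hMyd hPyd]
  have key2 : (η ^ 2) • (diagonal dx ⊗ₖ diagonal dy).mulVec u =
      lam • (diagonal ex ⊗ₖ diagonal ey).mulVec u := by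
    have h := congrArg (fun w => ((Px⁻¹ * Mx⁻¹) ⊗ₖ (Py⁻¹ * My⁻¹)).mulVec w) key
    simp only [Matrix.mulVec_smul, Matrix.mulVec_mulVec] at h
    rw [hCK, hCG, Matrix.smul_mulVec, ← Matrix.mulVec_mulVec,
      ← Matrix.mulVec_mulVec, ← hu] at h
    exact h
  -- pick a nonzero coordinate of u
  obtain ⟨⟨i, j⟩, hij⟩ := Function.ne_iff.mp hune
  refine ⟨i, j, ?_⟩
  have := congrFun key2 (i, j)
  simp only [diagonal_kronecker_diagonal, Pi.smul_apply, Matrix.mulVec_diagonal,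
    smul_eq_mul] at this
  have hijne : u (i, j) ≠ 0 := by simpa using hij
  have hlin : η ^ 2 * (dx i * dy j) = lam * (ex i * ey j) := by
    have := mul_right_cancel₀ hijne (by linarith [this] : η ^ 2 * (dx i * dy j) * u (i, j) = lam * (ex i * ey j) * u (i, j))
    exact this
  rw [eq_div_iff (mul_ne_zero (hexne i) (heyne j))]
  rw [hex, hey] at hlin
  ring_nf
  ring_nf at hlin
  linarith [hlin]
end
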